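/- Let P = (T, G, σ) be a pairing between a monad T and a comonad G on a category A, let t : T' ⟶ T be a morphism of monads, and let P' = (T', G, σ') be the induced pairing with σ'_a = σ_a ∘ t_{G(a)}. If P is rational and every component t_a of t is an epimorphism, then P' is rational. -/

import Mathlib

open CategoryTheory

universe v u

variable {A : Type u} [Category.{v} A]

/-- A **pairing** `(T, G, σ)` between a monad `T = (T, m, e)` and a comonad
`G = (G, δ, ε)` on a category `A` is a natural transformation `σ : TG ⟶ Id`
(with components `σ_a : T(G(a)) ⟶ a`) such that for every object `a`:
`σ_a ∘ e_{G(a)} = ε_a` and `σ_a ∘ m_{G(a)} = σ_a ∘ T(σ_{G(a)}) ∘ T²(δ_a)`. -/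
def IsPairing (T : Monad A) (G : Comonad A)
    (σ : G.toFunctor ⋙ T.toFunctor ⟶ 𝟭 A) : Prop :=
  (∀ a : A, T.η.app (G.obj a) ≫ σ.app a = G.ε.app a) ∧
  (∀ a : A, T.μ.app (G.obj a) ≫ σ.app a =
      T.map (T.map (G.δ.app a)) ≫ T.map (σ.app (G.obj a)) ≫ σ.app a)

/-- A pairing is **rational** if all the maps
`β_{a,b} : Hom(a, G(b)) → Hom(T(a), b)`, `f ↦ σ_b ∘ T(f)`, are injective. -/
def IsRationalPairing (T : Monad A) (G : Comonad A)
    (σ : G.toFunctor ⋙ T.toFunctor ⟶ 𝟭 A) : Prop :=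
  ∀ a b : A, Function.Injective (fun f : a ⟶ G.obj b => T.map f ≫ σ.app b)

/-- **3.3(ii).** If `P = (T, G, σ)` is a rational pairing, `t : T' ⟶ T` is a
morphism of monads all of whose components are epimorphisms, then the induced
pairing `P' = (T', G, σ')` with `σ'_a = σ_a ∘ t_{G(a)}` is also rational. -/
theorem rational_of_monadHom_epi (T T' : Monad A) (G : Comonad A)
    (σ : G.toFunctor ⋙ T.toFunctor ⟶ 𝟭 A)
    (hP : IsPairing T G σ) (hrat : IsRationalPairing T G σ)
    (t : T' ⟶ T) (hepi : ∀ a : A, Epi (t.toNatTrans.app a)) :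
    IsRationalPairing T' G (Functor.whiskerLeft G.toFunctor t.toNatTrans ≫ σ) := by
  intro a b f g h
  apply hrat a b
  simp only [NatTrans.comp_app, Functor.whiskerLeft_app] at h
  have hf := t.toNatTrans.naturality f
  have hg := t.toNatTrans.naturality g
  have := hepi a
  apply (cancel_epi (t.toNatTrans.app a)).mp
  simp only []
  rw [← Category.assoc, ← hf, ← Category.assoc, ← hg, Category.assoc, Category.assoc, h]
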